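/- For every θ > 0 and every x ≥ 0, ∫₀^x (θ/(θ+3))·(2+θ+θt)·e^{-θt} dt = 1 − (1 + θx/(θ+3))·e^{-θx}; that is, the cumulative distribution function of the i-Garima distribution is G(x;θ) = 1 − (1 + θx/(θ+3))·e^{-θx}. -/

import Mathlib

/-- The cdf of the i-Garima distribution:
∫₀^x g(t;θ) dt = 1 − (1 + θx/(θ+3))·e^{-θx} for x ≥ 0. -/
theorem iGarima_cdf (θ : ℝ) (hθ : 0 < θ) (x : ℝ) (hx : 0 ≤ x) :
    ∫ t in (0 : ℝ)..x, (θ / (θ + 3)) * (2 + θ + θ * t) * Real.exp (-θ * t)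
      = 1 - (1 + θ * x / (θ + 3)) * Real.exp (-θ * x) := by
  have hθ3 : θ + 3 ≠ 0 := by linarith
  have key : ∀ t : ℝ, HasDerivAt (fun t : ℝ => -(1 + θ * t / (θ + 3)) * Real.exp (-θ * t))
      ((θ / (θ + 3)) * (2 + θ + θ * t) * Real.exp (-θ * t)) t := by
    intro t
    have h1 : HasDerivAt (fun t : ℝ => -(1 + θ * t / (θ + 3))) (-(θ / (θ + 3))) t := by
      have := ((hasDerivAt_id t).const_mul θ).div_const (θ + 3)
      have h := (this.const_add 1).neg
      simp only [mul_one] at h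
      exact h
    have h2 : HasDerivAt (fun t : ℝ => Real.exp (-θ * t)) (Real.exp (-θ * t) * (-θ)) t := by
      have := ((hasDerivAt_id t).const_mul (-θ)).exp
      simpa using this
    have := h1.mul h2
    refine this.congr_deriv ?_
    field_simp
    ring
  rw [intervalIntegral.integral_eq_sub_of_hasDerivAt (fun t _ => key t)]
  · simp only [mul_zero, neg_zero, Real.exp_zero]
    field_simp
    ring
  · apply Continuous.intervalIntegrable
    continuity
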